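/- For every ϑ ∈ {p, bp, r}, neither of the spaces H_ϑ and L_u contains the other: there exists a double sequence belonging to L_u but not to H_ϑ (for instance x with x_{k,k} = 1/k² on the diagonal and 0 elsewhere), and there exists a double sequence belonging to H_ϑ but not to L_u (for instance x with x_{1,l} = 1 for all l and x_{k,l} = 0 for k ≥ 2). -/

import Mathlib

open Filter Topology

noncomputable section

/-- The set `Ω` of all complex double sequences (0-indexed: entry `x k l`
corresponds to the paper's `x_{k+1,l+1}`). -/
abbrev DSeq : Type := ℕ → ℕ → ℂ

/-- The double (forward) difference operator `Δ`. -/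
def dDiff (x : DSeq) (k l : ℕ) : ℂ :=
  x k l - x (k + 1) l - x k (l + 1) + x (k + 1) (l + 1)

/-- Pringsheim (p-) convergence of a double sequence to `L`. -/
def PConv (x : DSeq) (L : ℂ) : Prop :=
  ∀ ε > (0 : ℝ), ∃ N : ℕ, ∀ k ≥ N, ∀ l ≥ N, ‖x k l - L‖ < ε

/-- Boundedness of a double sequence. -/
def DBounded (x : DSeq) : Prop :=
  ∃ M : ℝ, ∀ k l : ℕ, ‖x k l‖ ≤ M

/-- bp-convergence: bounded Pringsheim convergence. -/
def BPConv (x : DSeq) (L : ℂ) : Prop := PConv x L ∧ DBounded x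

/-- r-convergence (regular convergence). -/
def RConv (x : DSeq) (L : ℂ) : Prop :=
  PConv x L ∧ (∀ k : ℕ, ∃ c : ℂ, Tendsto (fun l => x k l) atTop (nhds c)) ∧
    (∀ l : ℕ, ∃ c : ℂ, Tendsto (fun k => x k l) atTop (nhds c))

/-- The three convergence notions ϑ ∈ {p, bp, r}. -/
inductive Theta | p | bp | r

/-- ϑ-convergence. -/
def ThConv : Theta → DSeq → ℂ → Prop
  | Theta.p => PConv
  | Theta.bp => BPConv
  | Theta.r => RConv

/-- `Σ_{k,l} kl |Δx_{k,l}| < ∞` (0-indexed, so the weight is `(k+1)(l+1)`). -/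
def HahnSummable (x : DSeq) : Prop :=
  Summable (fun kl : ℕ × ℕ =>
    (((kl.1 + 1) * (kl.2 + 1) : ℕ) : ℝ) * ‖dDiff x kl.1 kl.2‖)

/-- The Hahn double sequence space `H_ϑ`. -/
def Hahn (θ : Theta) : Set DSeq := {x | HahnSummable x ∧ ThConv θ x 0}

/-- `‖x‖_H = Σ_{k,l} kl |Δx_{k,l}|`. -/
def hNorm (x : DSeq) : ℝ :=
  ∑' kl : ℕ × ℕ, (((kl.1 + 1) * (kl.2 + 1) : ℕ) : ℝ) * ‖dDiff x kl.1 kl.2‖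

/-- Rectangular partial sums of the products `a_{k,l} x_{k,l}`. -/
def pSum (a x : DSeq) (m n : ℕ) : ℂ :=
  ∑ k ∈ Finset.range (m + 1), ∑ l ∈ Finset.range (n + 1), a k l * x k l

/-- Rectangular partial sums of `a`. -/
def rectSum (a : DSeq) (m n : ℕ) : ℂ :=
  ∑ k ∈ Finset.range (m + 1), ∑ l ∈ Finset.range (n + 1), a k l

/-- The space `P_∞`: `sup_{m,n} (1/(mn)) |Σ_{k≤m,l≤n} a_{k,l}| < ∞`. -/
def Pinf (a : DSeq) : Prop :=
  ∃ C : ℝ, ∀ m n : ℕ,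
    (1 / (((m : ℝ) + 1) * ((n : ℝ) + 1))) * ‖rectSum a m n‖ ≤ C

/-- `L_u`: absolutely summable double sequences. -/
def Lu : Set DSeq := {x | Summable (fun kl : ℕ × ℕ => ‖x kl.1 kl.2‖)}

/-- `M_u`: bounded double sequences. -/
def Mu : Set DSeq := {x | DBounded x}

/-- `C_bp`: bp-convergent double sequences. -/
def Cbp : Set DSeq := {x | ∃ L : ℂ, BPConv x L}

/-- The integrated space `∫L_u = {x : Σ_{k,l} kl |x_{k,l}| < ∞}`. -/
def intLu : Set DSeq :=
  {x | Summable (fun kl : ℕ × ℕ =>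
    (((kl.1 + 1) * (kl.2 + 1) : ℕ) : ℝ) * ‖x kl.1 kl.2‖)}

/-- `BV`: double sequences of bounded variation. -/
def BVset : Set DSeq :=
  {x | Summable (fun kl : ℕ × ℕ => ‖dDiff x kl.1 kl.2‖)}

/-- The rectangular section `x^{[m,n]}`. -/
def sect (x : DSeq) (m n : ℕ) : DSeq :=
  fun k l => if k ≤ m ∧ l ≤ n then x k l else 0

/-- `sup_{k,l ≥ N} |x_{k,l}|` valued in `ℝ≥0∞`. -/
def supTail (x : DSeq) (N : ℕ) : ENNReal :=
  ⨆ k : ℕ, ⨆ l : ℕ, if N ≤ k ∧ N ≤ l then (‖x k l‖₊ : ENNReal) else 0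

/-- The seminorm on `H_p`: `Σ kl|Δx| + lim_N sup_{k,l≥N} |x_{k,l}|`
(the limit written as a limsup, which agrees with the limit whenever it exists). -/
def hpSemi (x : DSeq) : ℝ :=
  hNorm x + (Filter.limsup (supTail x) atTop).toReal

/-- The element `d^{(k,l)}` of the determining set. -/
def dkl (k l : ℕ) : DSeq :=
  fun i j => if i ≤ k ∧ j ≤ l then (1 / (((k : ℂ) + 1) * ((l : ℂ) + 1))) else 0

/-- Finitely supported double sequences (the set `φ`). -/
def FinSupp (x : DSeq) : Prop :=
  ∃ M : ℕ, ∀ k l : ℕ, (M ≤ k ∨ M ≤ l) → x k l = 0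

/-- A 4D matrix `B` belongs to the class `(X, Y)`: for every `x ∈ X` the rectangular
partial sums of every row are bounded and Pringsheim convergent, and the resulting
double sequence of limits `Bx` belongs to `Y`. -/
def MatDom (B : ℕ → ℕ → DSeq) (X Y : Set DSeq) : Prop :=
  ∀ x ∈ X, ∃ y ∈ Y, ∀ m n : ℕ, BPConv (pSum (B m n) x) (y m n)

/-- The associated 4D matrix `E`, `e_{m,n,k,l} = (1/(kl)) Σ_{i≤k,j≤l} a_{m,n,i,j}`. -/
def Emat (A : ℕ → ℕ → DSeq) (m n : ℕ) : DSeq :=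
  fun k l => (1 / (((k : ℂ) + 1) * ((l : ℂ) + 1))) * rectSum (A m n) k l

/-- The difference `Δ^{11}_{mn}` applied to the first pair of indices of a 4D matrix. -/
def d11 (A : ℕ → ℕ → DSeq) (m n k l : ℕ) : ℂ :=
  A m n k l - A (m + 1) n k l - A m (n + 1) k l + A (m + 1) (n + 1) k l

/-- The diagonal double sequence `x_{k,k} = 1/k²`, `0` elsewhere. -/
def xDiag : DSeq := fun k l => if k = l then 1 / (((k : ℂ) + 1) ^ 2) else 0

/-- The double sequence with first row `1` and all other rows `0`. -/
def xRow : DSeq := fun k _ => if k = 0 then 1 else 0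

lemma diag_injective : Function.Injective (fun k : ℕ => ((k, k) : ℕ × ℕ)) :=
  fun a b h => (Prod.ext_iff.mp h).1

lemma summable_aux : Summable (fun k : ℕ => 1 / ((k : ℝ) + 1) ^ 2) := by
  have h0 : Summable (fun n : ℕ => 1 / (n : ℝ) ^ 2) :=
    Real.summable_one_div_nat_pow.mpr (by norm_num)
  have h1 := (summable_nat_add_iff 1).mpr h0
  exact h1.congr (fun k => by push_cast; ring)

lemma xDiag_mem_Lu : xDiag ∈ Lu := by
  have hvan : ∀ kl : ℕ × ℕ, kl ∉ Set.range (fun k : ℕ => ((k, k) : ℕ × ℕ)) →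
      ‖xDiag kl.1 kl.2‖ = 0 := by
    rintro ⟨a, b⟩ h
    have hne : a ≠ b := by
      intro hab; exact h ⟨a, by simp [hab]⟩
    simp [xDiag, hne]
  rw [Lu, Set.mem_setOf_eq, ← diag_injective.summable_iff hvan]
  refine summable_aux.congr fun k => ?_
  have hc : ((k : ℂ) + 1) = ((k + 1 : ℕ) : ℂ) := by push_cast; ring
  simp only [Function.comp_apply, xDiag, if_pos rfl, ite_true]
  rw [norm_div, norm_one, norm_pow, hc, Complex.norm_natCast]
  push_cast; ring

lemma dDiff_xDiag (k : ℕ) :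
    dDiff xDiag k k = ((1 / ((k : ℝ) + 1) ^ 2 + 1 / ((k : ℝ) + 2) ^ 2 : ℝ) : ℂ) := by
  have h1 : k + 1 ≠ k := by omega
  have h2 : k ≠ k + 1 := by omega
  simp only [dDiff, xDiag, if_pos rfl, if_neg h1, if_neg h2]
  push_cast
  ring

lemma one_le_diag_term (k : ℕ) :
    1 ≤ (((k + 1) * (k + 1) : ℕ) : ℝ) * ‖dDiff xDiag k k‖ := by
  rw [dDiff_xDiag, Complex.norm_real, Real.norm_eq_abs,
    abs_of_nonneg (by positivity)]
  have h1 : (1 : ℝ) / ((k : ℝ) + 1) ^ 2 ≤ 1 / ((k : ℝ) + 1) ^ 2 + 1 / ((k : ℝ) + 2) ^ 2 :=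
    le_add_of_nonneg_right (by positivity)
  have h2 : (((k + 1) * (k + 1) : ℕ) : ℝ) * (1 / ((k : ℝ) + 1) ^ 2) = 1 := by
    have hp : ((k : ℝ) + 1) ^ 2 ≠ 0 := by positivity
    push_cast
    field_simp
  calc (1 : ℝ) = (((k + 1) * (k + 1) : ℕ) : ℝ) * (1 / ((k : ℝ) + 1) ^ 2) := h2.symm
    _ ≤ _ := mul_le_mul_of_nonneg_left h1 (by positivity)

lemma xDiag_not_hahnSummable : ¬ HahnSummable xDiag := by
  intro h
  have h2 := h.comp_injective diag_injective
  have h3 := h2.tendsto_atTop_zero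
  have h4 := (h3.eventually (gt_mem_nhds (by norm_num : (0 : ℝ) < 1))).exists
  obtain ⟨k, hk⟩ := h4
  exact absurd hk (not_lt.mpr (one_le_diag_term k))

lemma dDiff_xRow (k l : ℕ) : dDiff xRow k l = 0 := by
  by_cases h : k = 0 <;> simp [dDiff, xRow, h]

lemma pconv_xRow : PConv xRow 0 := by
  intro ε hε
  refine ⟨1, fun k hk l _ => ?_⟩
  have h : k ≠ 0 := by omega
  simp [xRow, h, hε]

lemma thconv_xRow (θ : Theta) : ThConv θ xRow 0 := by
  cases θ with
  | p => exact pconv_xRow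
  | bp =>
    refine ⟨pconv_xRow, 1, fun k l => ?_⟩
    by_cases h : k = 0 <;> simp [xRow, h]
  | r =>
    refine ⟨pconv_xRow, fun k => ⟨if k = 0 then 1 else 0, tendsto_const_nhds⟩,
      fun l => ⟨0, ?_⟩⟩
    refine tendsto_const_nhds.congr' ?_
    filter_upwards [Filter.eventually_ge_atTop 1] with k hk
    have h : k ≠ 0 := by omega
    simp [xRow, h]

lemma xRow_mem_Hahn (θ : Theta) : xRow ∈ Hahn θ := by
  refine ⟨?_, thconv_xRow θ⟩
  have heq : (fun kl : ℕ × ℕ =>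
      (((kl.1 + 1) * (kl.2 + 1) : ℕ) : ℝ) * ‖dDiff xRow kl.1 kl.2‖) =
      fun _ => 0 := by
    funext kl; simp [dDiff_xRow]
  rw [HahnSummable, heq]
  exact summable_zero

lemma xRow_not_mem_Lu : xRow ∉ Lu := by
  intro h
  have hinj : Function.Injective (fun l : ℕ => ((0, l) : ℕ × ℕ)) :=
    fun a b hab => (Prod.ext_iff.mp hab).2
  have h2 := h.comp_injective hinj
  have h3 : ((fun kl : ℕ × ℕ => ‖xRow kl.1 kl.2‖) ∘
      (fun l : ℕ => ((0, l) : ℕ × ℕ))) = fun _ => (1 : ℝ) := by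
    funext l; simp [Function.comp, xRow]
  rw [h3] at h2
  have h4 := h2.tendsto_atTop_zero
  have h5 : (1 : ℝ) = 0 := tendsto_nhds_unique tendsto_const_nhds h4
  norm_num at h5

/-- neither of `H_ϑ` and `L_u` includes the other. -/
theorem statement_6 (θ : Theta) :
    xDiag ∈ Lu ∧ xDiag ∉ Hahn θ ∧ xRow ∈ Hahn θ ∧ xRow ∉ Lu := by
  exact ⟨xDiag_mem_Lu, fun h => xDiag_not_hahnSummable h.1, xRow_mem_Hahn θ,
    xRow_not_mem_Lu⟩
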